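/- Let E = {(T_1,S_3),(T_2,S_3),(T_3,S_1),(T_3,S_4),(T_3,S_5),(T_4,S_1),(T_4,S_2),(T_4,S_5),(T_5,S_2),(T_5,S_3),(T_5,S_6),(T_6,S_3),(T_6,S_4),(T_6,S_6),(T_7,S_5),(T_8,S_5)} and let E' be the same set with (T_7,S_5),(T_8,S_5) replaced by (T_7,S_6),(T_8,S_6). Then there is no signed permutation matrix σ ∈ G such that {(σ·T, σ·S) : (T,S) ∈ E} = E'; i.e. the edge assignments E and E' are non-isomorphic under G. -/

import Mathlib

open Matrix

/-- `τ = (2√2+1)/7`. -/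
noncomputable def tau : ℝ := (2 * Real.sqrt 2 + 1) / 7

/-- The eight cube points `T_1, …, T_8` (indexed by `Fin 8`, so `T 0 = T_1` etc.). -/
noncomputable def T : Fin 8 → Fin 3 → ℝ :=
  ![tau • ![1, 1, 1], tau • ![-1, 1, 1], tau • ![-1, -1, 1], tau • ![1, -1, 1],
    tau • ![1, 1, -1], tau • ![-1, 1, -1], tau • ![-1, -1, -1], tau • ![1, -1, -1]]

/-- The six octahedron points `S_1, …, S_6` (indexed by `Fin 6`, so `S 0 = S_1` etc.). -/
def S : Fin 6 → Fin 3 → ℝ :=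
  ![![0, 0, 1], ![1, 0, 0], ![0, 1, 0], ![-1, 0, 0], ![0, -1, 0], ![0, 0, -1]]

/-- A `3×3` signed permutation matrix (element of the octahedral group `G`). -/
def IsSignedPerm (M : Matrix (Fin 3) (Fin 3) ℝ) : Prop :=
  Mᵀ * M = 1 ∧ (∀ i, ∃! j, M i j ≠ 0) ∧ (∀ j, ∃! i, M i j ≠ 0) ∧
    ∀ i j, M i j ≠ 0 → M i j = 1 ∨ M i j = -1

/-- The edge assignment `E`. -/
noncomputable def E : Set ((Fin 3 → ℝ) × (Fin 3 → ℝ)) :=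
  {(T 0, S 2), (T 1, S 2), (T 2, S 0), (T 2, S 3), (T 2, S 4), (T 3, S 0),
   (T 3, S 1), (T 3, S 4), (T 4, S 1), (T 4, S 2), (T 4, S 5), (T 5, S 2),
   (T 5, S 3), (T 5, S 5), (T 6, S 4), (T 7, S 4)}

/-- The edge assignment `E'`, which is `E` with `(T_7,S_5),(T_8,S_5)` replaced by
`(T_7,S_6),(T_8,S_6)`. -/
noncomputable def E' : Set ((Fin 3 → ℝ) × (Fin 3 → ℝ)) :=
  {(T 0, S 2), (T 1, S 2), (T 2, S 0), (T 2, S 3), (T 2, S 4), (T 3, S 0),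
   (T 3, S 1), (T 3, S 4), (T 4, S 1), (T 4, S 2), (T 4, S 5), (T 5, S 2),
   (T 5, S 3), (T 5, S 5), (T 6, S 5), (T 7, S 5)}

lemma tau_pos : 0 < tau := by
  unfold tau; positivity

lemma S_inj : Function.Injective S := by
  intro j k h
  fin_cases j <;> fin_cases k <;>
    first
      | rfl
      | (exfalso
         have h0 := congrFun h 0
         have h1 := congrFun h 1
         have h2 := congrFun h 2
         revert h0 h1 h2
         norm_num [S, Matrix.cons_val_two])

lemma T01 : T 0 ≠ T 1 := fun h => by
  have h' : tau * 1 = tau * (-1) := congrFun h 0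
  nlinarith [tau_pos]

lemma T04 : T 0 ≠ T 4 := fun h => by
  have h' : tau * 1 = tau * (-1) := congrFun h 2
  nlinarith [tau_pos]

lemma T14 : T 1 ≠ T 4 := fun h => by
  have h' : tau * (-1) = tau * 1 := congrFun h 0
  nlinarith [tau_pos]

lemma T23 : T 2 ≠ T 3 := fun h => by
  have h' : tau * (-1) = tau * 1 := congrFun h 0
  nlinarith [tau_pos]

lemma T26 : T 2 ≠ T 6 := fun h => by
  have h' : tau * 1 = tau * (-1) := congrFun h 2
  nlinarith [tau_pos]

lemma T36 : T 3 ≠ T 6 := fun h => by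
  have h' : tau * 1 = tau * (-1) := congrFun h 2
  nlinarith [tau_pos]

/-- The partners of `S 0` in `E'`. -/
lemma partners0 (y : Fin 3 → ℝ) (h : (y, S 0) ∈ E') : y = T 2 ∨ y = T 3 := by
  simp only [E', Set.mem_insert_iff, Set.mem_singleton_iff, Prod.mk.injEq] at h
  rcases h with ⟨h1, h2⟩|⟨h1, h2⟩|⟨h1, h2⟩|⟨h1, h2⟩|⟨h1, h2⟩|⟨h1, h2⟩|⟨h1, h2⟩|⟨h1, h2⟩|⟨h1, h2⟩|⟨h1, h2⟩|⟨h1, h2⟩|⟨h1, h2⟩|⟨h1, h2⟩|⟨h1, h2⟩|⟨h1, h2⟩|⟨h1, h2⟩ <;>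
    first
      | exact Or.inl h1
      | exact Or.inr h1
      | exact absurd (S_inj h2) (by decide)

lemma partners1 (y : Fin 3 → ℝ) (h : (y, S 1) ∈ E') : y = T 3 ∨ y = T 4 := by
  simp only [E', Set.mem_insert_iff, Set.mem_singleton_iff, Prod.mk.injEq] at h
  rcases h with ⟨h1, h2⟩|⟨h1, h2⟩|⟨h1, h2⟩|⟨h1, h2⟩|⟨h1, h2⟩|⟨h1, h2⟩|⟨h1, h2⟩|⟨h1, h2⟩|⟨h1, h2⟩|⟨h1, h2⟩|⟨h1, h2⟩|⟨h1, h2⟩|⟨h1, h2⟩|⟨h1, h2⟩|⟨h1, h2⟩|⟨h1, h2⟩ <;>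
    first
      | exact Or.inl h1
      | exact Or.inr h1
      | exact absurd (S_inj h2) (by decide)

lemma partners3 (y : Fin 3 → ℝ) (h : (y, S 3) ∈ E') : y = T 2 ∨ y = T 5 := by
  simp only [E', Set.mem_insert_iff, Set.mem_singleton_iff, Prod.mk.injEq] at h
  rcases h with ⟨h1, h2⟩|⟨h1, h2⟩|⟨h1, h2⟩|⟨h1, h2⟩|⟨h1, h2⟩|⟨h1, h2⟩|⟨h1, h2⟩|⟨h1, h2⟩|⟨h1, h2⟩|⟨h1, h2⟩|⟨h1, h2⟩|⟨h1, h2⟩|⟨h1, h2⟩|⟨h1, h2⟩|⟨h1, h2⟩|⟨h1, h2⟩ <;>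
    first
      | exact Or.inl h1
      | exact Or.inr h1
      | exact absurd (S_inj h2) (by decide)

lemma partners4 (y : Fin 3 → ℝ) (h : (y, S 4) ∈ E') : y = T 2 ∨ y = T 3 := by
  simp only [E', Set.mem_insert_iff, Set.mem_singleton_iff, Prod.mk.injEq] at h
  rcases h with ⟨h1, h2⟩|⟨h1, h2⟩|⟨h1, h2⟩|⟨h1, h2⟩|⟨h1, h2⟩|⟨h1, h2⟩|⟨h1, h2⟩|⟨h1, h2⟩|⟨h1, h2⟩|⟨h1, h2⟩|⟨h1, h2⟩|⟨h1, h2⟩|⟨h1, h2⟩|⟨h1, h2⟩|⟨h1, h2⟩|⟨h1, h2⟩ <;>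
    first
      | exact Or.inl h1
      | exact Or.inr h1
      | exact absurd (S_inj h2) (by decide)

/-- Any octahedron vertex with three distinct partners in `E'` is `S 2` or `S 5`. -/
lemma classify {a b c x : Fin 3 → ℝ} (ha : (a, x) ∈ E') (hb : (b, x) ∈ E')
    (hc : (c, x) ∈ E') (hab : a ≠ b) (hac : a ≠ c) (hbc : b ≠ c) :
    x = S 2 ∨ x = S 5 := by
  have hx : x = S 0 ∨ x = S 1 ∨ x = S 2 ∨ x = S 3 ∨ x = S 4 ∨ x = S 5 := by
    simp only [E', Set.mem_insert_iff, Set.mem_singleton_iff, Prod.mk.injEq] at ha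
    tauto
  have key : ¬ (x = S 0 ∨ x = S 1 ∨ x = S 3 ∨ x = S 4) := by
    rintro (rfl | rfl | rfl | rfl)
    · rcases partners0 a ha with h|h <;> rcases partners0 b hb with h'|h' <;>
        rcases partners0 c hc with h''|h'' <;>
        first
          | exact hab (h.trans h'.symm)
          | exact hac (h.trans h''.symm)
          | exact hbc (h'.trans h''.symm)
    · rcases partners1 a ha with h|h <;> rcases partners1 b hb with h'|h' <;>
        rcases partners1 c hc with h''|h'' <;>
        first
          | exact hab (h.trans h'.symm)
          | exact hac (h.trans h''.symm)
          | exact hbc (h'.trans h''.symm)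
    · rcases partners3 a ha with h|h <;> rcases partners3 b hb with h'|h' <;>
        rcases partners3 c hc with h''|h'' <;>
        first
          | exact hab (h.trans h'.symm)
          | exact hac (h.trans h''.symm)
          | exact hbc (h'.trans h''.symm)
    · rcases partners4 a ha with h|h <;> rcases partners4 b hb with h'|h' <;>
        rcases partners4 c hc with h''|h'' <;>
        first
          | exact hab (h.trans h'.symm)
          | exact hac (h.trans h''.symm)
          | exact hbc (h'.trans h''.symm)
  tauto

/-- There is no signed permutation matrix `σ ∈ G` carrying the edge assignment `E`
onto `E'` componentwise: `E` and `E'` are non-isomorphic under `G`. -/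
theorem stmt_4 :
    ¬ ∃ σ : Matrix (Fin 3) (Fin 3) ℝ, IsSignedPerm σ ∧
      (fun p : (Fin 3 → ℝ) × (Fin 3 → ℝ) => (σ.mulVec p.1, σ.mulVec p.2)) '' E = E' := by
  rintro ⟨σ, hperm, himg⟩
  have hinj : Function.Injective σ.mulVec := by
    intro x y h
    have h2 : (σᵀ * σ).mulVec x = (σᵀ * σ).mulVec y := by
      rw [← Matrix.mulVec_mulVec, ← Matrix.mulVec_mulVec, h]
    simpa [hperm.1, Matrix.one_mulVec] using h2
  have him : ∀ p ∈ E, (σ.mulVec p.1, σ.mulVec p.2) ∈ E' := by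
    intro p hp
    rw [← himg]
    exact ⟨p, hp, rfl⟩
  -- partners of u := σ (S 2)
  have hu0 : (σ.mulVec (T 0), σ.mulVec (S 2)) ∈ E' := him (T 0, S 2) (by simp [E])
  have hu1 : (σ.mulVec (T 1), σ.mulVec (S 2)) ∈ E' := him (T 1, S 2) (by simp [E])
  have hu4 : (σ.mulVec (T 4), σ.mulVec (S 2)) ∈ E' := him (T 4, S 2) (by simp [E])
  -- partners of v := σ (S 4)
  have hv2 : (σ.mulVec (T 2), σ.mulVec (S 4)) ∈ E' := him (T 2, S 4) (by simp [E])
  have hv3 : (σ.mulVec (T 3), σ.mulVec (S 4)) ∈ E' := him (T 3, S 4) (by simp [E])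
  have hv6 : (σ.mulVec (T 6), σ.mulVec (S 4)) ∈ E' := him (T 6, S 4) (by simp [E])
  have cu : σ.mulVec (S 2) = S 2 ∨ σ.mulVec (S 2) = S 5 :=
    classify hu0 hu1 hu4 (fun h => T01 (hinj h)) (fun h => T04 (hinj h))
      (fun h => T14 (hinj h))
  have cv : σ.mulVec (S 4) = S 2 ∨ σ.mulVec (S 4) = S 5 :=
    classify hv2 hv3 hv6 (fun h => T23 (hinj h)) (fun h => T26 (hinj h))
      (fun h => T36 (hinj h))
  have hS42 : S 4 = -(S 2) := by
    funext i
    fin_cases i <;> simp [S, Matrix.cons_val_four, Matrix.cons_val_two]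
  have hvneg : σ.mulVec (S 4) = -(σ.mulVec (S 2)) := by
    rw [hS42, Matrix.mulVec_neg]
  have huv : σ.mulVec (S 2) ≠ σ.mulVec (S 4) := fun h =>
    absurd (S_inj (hinj h)) (by decide)
  rcases cu with hu|hu <;> rcases cv with hv|hv
  · exact huv (hu.trans hv.symm)
  · rw [hu, hv] at hvneg
    have h : (-1 : ℝ) = -(0 : ℝ) := congrFun hvneg 2
    norm_num at h
  · rw [hu, hv] at hvneg
    have h : (1 : ℝ) = -(0 : ℝ) := congrFun hvneg 1
    norm_num at h
  · exact huv (hu.trans hv.symm)
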